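/- Let F be a field of characteristic zero (or characteristic > n). Every nonzero multiple of the polynomial (x_1+1)(x_2+1)⋯(x_n+1) in F[x_1,...,x_n] has at least 2^n monomials. -/

import Mathlib

open MvPolynomial

/-- A nonzero polynomial divisible by `X + 1` over a domain has at least two terms. -/
lemma aux_two_le_card {R : Type*} [CommRing R] [IsDomain R]
    (q : Polynomial R) (hq : q ≠ 0) (hdvd : Polynomial.X + 1 ∣ q) :
    2 ≤ q.support.card := by
  by_contra h
  push_neg at h
  interval_cases hc : q.support.card
  · exact hq (Polynomial.support_eq_empty.mp (Finset.card_eq_zero.mp hc))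
  · obtain ⟨k, x, hx, rfl⟩ := Polynomial.card_support_eq_one.mp hc
    have hroot : Polynomial.IsRoot (Polynomial.C x * Polynomial.X ^ k) (-1) := by
      rw [← Polynomial.dvd_iff_isRoot]
      simpa using hdvd
    simp only [Polynomial.IsRoot, Polynomial.eval_mul, Polynomial.eval_C,
      Polynomial.eval_pow, Polynomial.eval_X] at hroot
    rcases mul_eq_zero.mp hroot with h1 | h1
    · exact hx h1
    · exact (pow_ne_zero k (by norm_num : (-1 : R) ≠ 0)) h1

/-- Core induction: over a field, any nonzero multiple of `∏ (Xᵢ + 1)` has at least `2ⁿ`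
monomials. -/
lemma aux_main {F : Type*} [Field F] : ∀ (n : ℕ) (g : MvPolynomial (Fin n) F), g ≠ 0 →
    2 ^ n ≤ (g * ∏ i : Fin n, (X i + 1)).support.card := by
  intro n
  induction n with
  | zero =>
    intro g hg
    simpa using Finset.card_pos.mpr (support_nonempty.mpr (by simpa using hg))
  | succ n ih =>
    intro g hg
    set P : MvPolynomial (Fin n) F := ∏ i : Fin n, (X i + 1) with hP
    set h : MvPolynomial (Fin (n + 1)) F := g * ∏ i : Fin (n + 1), (X i + 1) with hh
    set q : Polynomial (MvPolynomial (Fin n) F) :=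
      finSuccEquiv F n (g * (X 0 + 1)) with hqdef
    have hq0 : q ≠ 0 := by
      simp only [hqdef, ne_eq, AddEquivClass.map_eq_zero_iff]
      exact mul_ne_zero hg (by
        intro hcon
        have := congrArg (coeff 0) hcon
        simp [coeff_zero_X] at this)
    have hqdvd : Polynomial.X + 1 ∣ q := by
      refine ⟨finSuccEquiv F n g, ?_⟩
      rw [hqdef, map_mul, map_add, finSuccEquiv_X_zero, map_one, mul_comm]
    -- finSuccEquiv of h
    have hkey : ∀ k : ℕ, (finSuccEquiv F n h).coeff k = q.coeff k * P := by
      intro k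
      have hsplit : h = (g * (X 0 + 1)) * ∏ i : Fin n, (X i.succ + 1) := by
        rw [hh, Fin.prod_univ_succ]; ring
      have hCP : finSuccEquiv F n (∏ i : Fin n, (X (Fin.succ i) + 1)) = Polynomial.C P := by
        rw [map_prod, hP, map_prod]
        refine Finset.prod_congr rfl fun i _ => ?_
        rw [map_add, finSuccEquiv_X_succ, map_one, ← Polynomial.C_1, ← Polynomial.C_add]
      rw [hsplit, map_mul, hCP, ← hqdef, Polynomial.coeff_mul_C]
    -- q has at least two nonzero coefficients
    have hq2 : 2 ≤ q.support.card := aux_two_le_card q hq0 hqdvd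
    -- the big disjoint union inside h.support
    classical
    set T : Finset (Fin (n + 1) →₀ ℕ) :=
      q.support.biUnion (fun k => ((q.coeff k * P).support.image (Finsupp.cons k))) with hT
    have hTsub : T ⊆ h.support := by
      intro m hm
      rw [hT, Finset.mem_biUnion] at hm
      obtain ⟨k, hk, hm⟩ := hm
      obtain ⟨m', hm', rfl⟩ := Finset.mem_image.mp hm
      rw [← hkey k] at hm'
      exact mem_support_coeff_finSuccEquiv.mp hm'
    have hTcard : T.card = ∑ k ∈ q.support, (q.coeff k * P).support.card := by
      rw [hT, Finset.card_biUnion]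
      · refine Finset.sum_congr rfl fun k _ => ?_
        rw [Finset.card_image_of_injective _ (Finsupp.cons_right_injective k)]
      · intro k hk k' hk' hkk'
        simp only [Finset.disjoint_left]
        intro m hm hm'
        obtain ⟨a, ha, rfl⟩ := Finset.mem_image.mp hm
        obtain ⟨b, hb, hab⟩ := Finset.mem_image.mp hm'
        apply hkk'
        have := congrArg (fun f : Fin (n+1) →₀ ℕ => f 0) hab
        simpa [Finsupp.cons_zero] using this.symm
    have hbound : ∀ k ∈ q.support, 2 ^ n ≤ (q.coeff k * P).support.card := by
      intro k hk
      exact ih (q.coeff k) (Polynomial.mem_support_iff.mp hk)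
    calc 2 ^ (n + 1) = 2 * 2 ^ n := by ring
    _ ≤ q.support.card * 2 ^ n := Nat.mul_le_mul_right _ hq2
    _ = ∑ _k ∈ q.support, 2 ^ n := by rw [Finset.sum_const, smul_eq_mul]
    _ ≤ ∑ k ∈ q.support, (q.coeff k * P).support.card := Finset.sum_le_sum hbound
    _ = T.card := hTcard.symm
    _ ≤ h.support.card := Finset.card_le_card hTsub

/-- Over a field of characteristic `0` or `> n`, every nonzero multiple of
`(x₁+1)(x₂+1)⋯(xₙ+1)` has at least `2ⁿ` monomials. -/
theorem stmt6 {F : Type*} [Field F] (n : ℕ) (p : ℕ) [CharP F p] (hp : p = 0 ∨ n < p)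
    (g : MvPolynomial (Fin n) F) (hg : g ≠ 0) :
    2 ^ n ≤ (g * ∏ i : Fin n, (X i + 1)).support.card := by
  exact aux_main n g hg
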